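/- arXiv:2504.00835 — 4 statements merged into one kernel-verified Lean document; each statement's English description precedes it below -/
import Mathlib

section
/- The periodic two-site Motzkin Hamiltonian H = Π + PΠP (a 9×9 matrix) annihilates all five vectors v₂ = |uu⟩, v₁ = |uf⟩+|fu⟩, v₀ = |ud⟩+|ff⟩+|du⟩, v₋₁ = |fd⟩+|df⟩, v₋₂ = |dd⟩: H·v_k = 0 for k = -2,...,2. -/
open Matrix
open scoped Kronecker

noncomputable section

/-- Spin-1 raising operator. -/
def sp : Matrix (Fin 3) (Fin 3) ℂ := !![0,1,0; 0,0,1; 0,0,0]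
/-- Spin-1 lowering operator. -/
def sm : Matrix (Fin 3) (Fin 3) ℂ := !![0,0,0; 1,0,0; 0,1,0]
/-- Spin-1 z-component. -/
def sz : Matrix (Fin 3) (Fin 3) ℂ := !![1,0,0; 0,0,0; 0,0,-1]

/-- Standard basis vectors of ℂ³. -/
def u : Fin 3 → ℂ := ![1,0,0]
def f : Fin 3 → ℂ := ![0,1,0]
def d : Fin 3 → ℂ := ![0,0,1]

/-- Tensor product of two vectors of ℂ³. -/
def tp (a b : Fin 3 → ℂ) : Fin 3 × Fin 3 → ℂ := fun p => a p.1 * b p.2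

/-- Rank-one projector U. -/
def U : Matrix (Fin 3 × Fin 3) (Fin 3 × Fin 3) ℂ :=
  (1/2 : ℂ) • vecMulVec (tp u f - tp f u) (tp u f - tp f u)
/-- Rank-one projector D. -/
def D : Matrix (Fin 3 × Fin 3) (Fin 3 × Fin 3) ℂ :=
  (1/2 : ℂ) • vecMulVec (tp d f - tp f d) (tp d f - tp f d)
/-- Rank-one projector F. -/
def F : Matrix (Fin 3 × Fin 3) (Fin 3 × Fin 3) ℂ :=
  (1/2 : ℂ) • vecMulVec (tp u d - tp f f) (tp u d - tp f f)

/-- The Motzkin projector Π = U + D + F. -/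
def Proj : Matrix (Fin 3 × Fin 3) (Fin 3 × Fin 3) ℂ := U + D + F

/-- The swap (permutation) operator on ℂ³ ⊗ ℂ³. -/
def P : Matrix (Fin 3 × Fin 3) (Fin 3 × Fin 3) ℂ :=
  fun p q => if p.1 = q.2 ∧ p.2 = q.1 then 1 else 0

lemma vmv_mulVec (w v x : Fin 3 × Fin 3 → ℂ) :
    (vecMulVec w v).mulVec x = (v ⬝ᵥ x) • w := by
  funext p
  simp [vecMulVec, mulVec, dotProduct, Finset.mul_sum, mul_assoc, mul_comm, mul_left_comm]

lemma P_mulVec (v : Fin 3 × Fin 3 → ℂ) :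
    P.mulVec v = fun p => v (p.2, p.1) := by
  funext p
  have h : ∀ q : Fin 3 × Fin 3, P p q = if q = (p.2, p.1) then 1 else 0 := by
    intro q
    simp [P, Prod.ext_iff, and_comm, eq_comm]
  simp [mulVec, dotProduct, h, ite_mul]

lemma proj_zero (v : Fin 3 × Fin 3 → ℂ)
    (h1 : (tp u f - tp f u) ⬝ᵥ v = 0)
    (h2 : (tp d f - tp f d) ⬝ᵥ v = 0)
    (h3 : (tp u d - tp f f) ⬝ᵥ v = 0) :
    Proj.mulVec v = 0 := by
  simp [Proj, U, D, F, add_mulVec, smul_mulVec, vmv_mulVec, h1, h2, h3]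

theorem periodic_two_site_ground_states :
    (Proj + P * Proj * P).mulVec (tp u u) = 0 ∧
    (Proj + P * Proj * P).mulVec (tp u f + tp f u) = 0 ∧
    (Proj + P * Proj * P).mulVec (tp u d + tp f f + tp d u) = 0 ∧
    (Proj + P * Proj * P).mulVec (tp f d + tp d f) = 0 ∧
    (Proj + P * Proj * P).mulVec (tp d d) = 0 := by
  have key : ∀ v : Fin 3 × Fin 3 → ℂ, (fun p => v (p.2, p.1)) = v →
      Proj.mulVec v = 0 → (Proj + P * Proj * P).mulVec v = 0 := by
    intro v hsym hz
    rw [add_mulVec, hz, ← mulVec_mulVec, ← mulVec_mulVec, P_mulVec v, hsym, hz,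
      mulVec_zero, zero_add]
  refine ⟨?_, ?_, ?_, ?_, ?_⟩ <;>
  · apply key
    · funext p
      simp only [tp, Pi.add_apply]
      ring
    · apply proj_zero <;>
      · simp [dotProduct, Fintype.sum_prod_type, Fin.sum_univ_three, tp, u, f, d]
end
end

section
/- The operator Σ⁺ = s₁⁺ + s₂⁺ + (s₁⁺)² s₂⁻ + s₁⁻ (s₂⁺)² commutes with the periodic two-site Motzkin Hamiltonian H = Π + PΠP, and so does Σ⁻ = (Σ⁺)ᵀ. -/
open Matrix
open scoped Kronecker

noncomputable section

/-- The raising operator Σ⁺ for the two-site chain. -/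
def Sig : Matrix (Fin 3 × Fin 3) (Fin 3 × Fin 3) ℂ :=
  sp ⊗ₖ (1 : Matrix (Fin 3) (Fin 3) ℂ) + (1 : Matrix (Fin 3) (Fin 3) ℂ) ⊗ₖ sp
    + (sp ^ 2) ⊗ₖ sm + sm ⊗ₖ (sp ^ 2)

namespace SigAux

def spZ : Matrix (Fin 3) (Fin 3) ℤ := !![0,1,0; 0,0,1; 0,0,0]
def smZ : Matrix (Fin 3) (Fin 3) ℤ := !![0,0,0; 1,0,0; 0,1,0]
def SigZ : Matrix (Fin 3 × Fin 3) (Fin 3 × Fin 3) ℤ :=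
  spZ ⊗ₖ 1 + 1 ⊗ₖ spZ + (spZ * spZ) ⊗ₖ smZ + smZ ⊗ₖ (spZ * spZ)

def uZ : Fin 3 → ℤ := ![1,0,0]
def fZ : Fin 3 → ℤ := ![0,1,0]
def dZ : Fin 3 → ℤ := ![0,0,1]
def tpZ (a b : Fin 3 → ℤ) : Fin 3 × Fin 3 → ℤ := fun p => a p.1 * b p.2

/-- 2Π over ℤ -/
def PiZ : Matrix (Fin 3 × Fin 3) (Fin 3 × Fin 3) ℤ :=
  vecMulVec (tpZ uZ fZ - tpZ fZ uZ) (tpZ uZ fZ - tpZ fZ uZ)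
  + vecMulVec (tpZ dZ fZ - tpZ fZ dZ) (tpZ dZ fZ - tpZ fZ dZ)
  + vecMulVec (tpZ uZ dZ - tpZ fZ fZ) (tpZ uZ dZ - tpZ fZ fZ)

def PZ : Matrix (Fin 3 × Fin 3) (Fin 3 × Fin 3) ℤ :=
  fun p q => if p.1 = q.2 ∧ p.2 = q.1 then 1 else 0

def HZ : Matrix (Fin 3 × Fin 3) (Fin 3 × Fin 3) ℤ := PiZ + PZ * PiZ * PZ

lemma key1 : SigZ * HZ = HZ * SigZ := by decide
lemma key2 : SigZ.transpose * HZ = HZ * SigZ.transpose := by decide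

def phi : Matrix (Fin 3 × Fin 3) (Fin 3 × Fin 3) ℤ →+* Matrix (Fin 3 × Fin 3) (Fin 3 × Fin 3) ℂ :=
  (Int.castRingHom ℂ).mapMatrix

lemma sp_sq : sp ^ 2 = !![0,0,1; 0,0,0; 0,0,0] := by
  ext i j
  fin_cases i <;> fin_cases j <;>
    simp [pow_two, sp, Matrix.mul_apply, Fin.sum_univ_three, Matrix.vecHead, Matrix.vecTail]

lemma spZ_sq : spZ * spZ = !![0,0,1; 0,0,0; 0,0,0] := by
  ext i j
  fin_cases i <;> fin_cases j <;>
    simp [spZ, Matrix.mul_apply, Fin.sum_univ_three, Matrix.vecHead, Matrix.vecTail]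

set_option maxHeartbeats 1000000 in
lemma Sig_eq : Sig = phi SigZ := by
  show Sig = SigZ.map (Int.cast)
  rw [Sig, SigZ, sp_sq, spZ_sq]
  ext ⟨i, j⟩ ⟨k, l⟩
  fin_cases i <;> fin_cases j <;> fin_cases k <;> fin_cases l <;>
    simp [sp, sm, spZ, smZ, Matrix.one_apply, Matrix.vecHead, Matrix.vecTail]

set_option maxHeartbeats 1000000 in
lemma Proj_eq : (2 : ℂ) • Proj = phi PiZ := by
  show (2 : ℂ) • Proj = PiZ.map (Int.cast)
  ext ⟨i, j⟩ ⟨k, l⟩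
  fin_cases i <;> fin_cases j <;> fin_cases k <;> fin_cases l <;>
    (simp [Proj, PiZ, U, D, F, tp, tpZ, u, f, d, uZ, fZ, dZ, vecMulVec,
      Matrix.vecHead, Matrix.vecTail] <;> norm_num) <;> ring

lemma P_eq : P = phi PZ := by
  show P = PZ.map (Int.cast)
  ext ⟨i, j⟩ ⟨k, l⟩
  simp [P, PZ, apply_ite]

end SigAux

open SigAux

theorem Sigma_commutes_with_periodic_H :
    Sig * (Proj + P * Proj * P) = (Proj + P * Proj * P) * Sig ∧
    Sig.transpose * (Proj + P * Proj * P) = (Proj + P * Proj * P) * Sig.transpose := by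
  have hH : (2 : ℂ) • (Proj + P * Proj * P) = phi HZ := by
    rw [smul_add]
    have h2 : (2 : ℂ) • (P * Proj * P) = P * ((2 : ℂ) • Proj) * P := by
      rw [Matrix.mul_smul, Matrix.smul_mul]
    rw [h2, Proj_eq, P_eq, HZ, _root_.map_add, _root_.map_mul, _root_.map_mul]
  have cancel : ∀ A B : Matrix (Fin 3 × Fin 3) (Fin 3 × Fin 3) ℂ,
      A * ((2 : ℂ) • B) = ((2 : ℂ) • B) * A → A * B = B * A := by
    intro A B h
    rw [Matrix.mul_smul, Matrix.smul_mul] at h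
    exact smul_right_injective _ (two_ne_zero) h
  have hT : Sig.transpose = phi SigZ.transpose := by
    rw [Sig_eq]
    show (SigZ.map (Int.cast)).transpose = SigZ.transpose.map (Int.cast)
    rw [Matrix.transpose_map]
  refine ⟨cancel _ _ ?_, cancel _ _ ?_⟩
  · rw [hH, Sig_eq, ← _root_.map_mul, ← _root_.map_mul, key1]
  · rw [hH, hT, ← _root_.map_mul, ← _root_.map_mul, key2]
end
end

section
/- Define Σᶻ = [Σ⁺,Σ⁻], Λ± = ±[Σᶻ, Σ^±], Λᶻ = [Λ⁺,Λ⁻] for the two-site chain. Then [Σᶻ, Λᶻ] = 0. -/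
open Matrix
open scoped Kronecker

noncomputable section

/-- Σ⁻ = (Σ⁺)ᵀ. -/
def SigM : Matrix (Fin 3 × Fin 3) (Fin 3 × Fin 3) ℂ := Sig.transpose

/-- Σᶻ = [Σ⁺, Σ⁻]. -/
def SigZ : Matrix (Fin 3 × Fin 3) (Fin 3 × Fin 3) ℂ := Sig * SigM - SigM * Sig

/-- Λ⁺ = [Σᶻ, Σ⁺]. -/
def LamP : Matrix (Fin 3 × Fin 3) (Fin 3 × Fin 3) ℂ := SigZ * Sig - Sig * SigZ

/-- Λ⁻ = -[Σᶻ, Σ⁻]. -/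
def LamM : Matrix (Fin 3 × Fin 3) (Fin 3 × Fin 3) ℂ := -(SigZ * SigM - SigM * SigZ)

/-- Λᶻ = [Λ⁺, Λ⁻]. -/
def LamZ : Matrix (Fin 3 × Fin 3) (Fin 3 × Fin 3) ℂ := LamP * LamM - LamM * LamP


namespace MotzkinAux

def zsp : Matrix (Fin 3) (Fin 3) ℤ := !![0,1,0; 0,0,1; 0,0,0]
def zsm : Matrix (Fin 3) (Fin 3) ℤ := !![0,0,0; 1,0,0; 0,1,0]

def zSig : Matrix (Fin 3 × Fin 3) (Fin 3 × Fin 3) ℤ :=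
  zsp ⊗ₖ (1 : Matrix (Fin 3) (Fin 3) ℤ) + (1 : Matrix (Fin 3) (Fin 3) ℤ) ⊗ₖ zsp
    + (zsp ^ 2) ⊗ₖ zsm + zsm ⊗ₖ (zsp ^ 2)

def zA : Matrix (Fin 9) (Fin 9) ℤ := !![0,1,0,1,0,0,0,0,0; 0,0,1,0,1,0,1,0,0; 0,0,0,0,0,1,0,1,0; 0,0,1,0,1,0,1,0,0; 0,0,0,0,0,1,0,1,0; 0,0,0,0,0,0,0,0,1; 0,0,0,0,0,1,0,1,0; 0,0,0,0,0,0,0,0,1; 0,0,0,0,0,0,0,0,0]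
def zB : Matrix (Fin 9) (Fin 9) ℤ := !![2,0,0,0,0,0,0,0,0; 0,2,0,2,0,0,0,0,0; 0,0,0,0,0,0,0,0,0; 0,2,0,2,0,0,0,0,0; 0,0,0,0,0,0,0,0,0; 0,0,0,0,0,-2,0,-2,0; 0,0,0,0,0,0,0,0,0; 0,0,0,0,0,-2,0,-2,0; 0,0,0,0,0,0,0,0,-2]
def zC : Matrix (Fin 9) (Fin 9) ℤ := !![0,-2,0,-2,0,0,0,0,0; 0,0,4,0,4,0,4,0,0; 0,0,0,0,0,4,0,4,0; 0,0,4,0,4,0,4,0,0; 0,0,0,0,0,4,0,4,0; 0,0,0,0,0,0,0,0,-2; 0,0,0,0,0,4,0,4,0; 0,0,0,0,0,0,0,0,-2; 0,0,0,0,0,0,0,0,0]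
def zD : Matrix (Fin 9) (Fin 9) ℤ := !![0,0,0,0,0,0,0,0,0; -2,0,0,0,0,0,0,0,0; 0,4,0,4,0,0,0,0,0; -2,0,0,0,0,0,0,0,0; 0,4,0,4,0,0,0,0,0; 0,0,4,0,4,0,4,0,0; 0,4,0,4,0,0,0,0,0; 0,0,4,0,4,0,4,0,0; 0,0,0,0,0,-2,0,-2,0]
def zE : Matrix (Fin 9) (Fin 9) ℤ := !![8,0,0,0,0,0,0,0,0; 0,44,0,44,0,0,0,0,0; 0,0,0,0,0,0,0,0,0; 0,44,0,44,0,0,0,0,0; 0,0,0,0,0,0,0,0,0; 0,0,0,0,0,-44,0,-44,0; 0,0,0,0,0,0,0,0,0; 0,0,0,0,0,-44,0,-44,0; 0,0,0,0,0,0,0,0,-8]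

def e : Fin 3 × Fin 3 ≃ Fin 9 := finProdFinEquiv

/-- Lift a 9×9 integer matrix to a (Fin 3 × Fin 3)-indexed complex matrix. -/
def Mm (X : Matrix (Fin 9) (Fin 9) ℤ) : Matrix (Fin 3 × Fin 3) (Fin 3 × Fin 3) ℂ :=
  (X.map (Int.castRingHom ℂ)).submatrix e e

lemma Mm_mul (X Y : Matrix (Fin 9) (Fin 9) ℤ) : Mm X * Mm Y = Mm (X * Y) := by
  unfold Mm
  rw [Matrix.submatrix_mul_equiv _ _ _ (e : Fin 3 × Fin 3 ≃ Fin 9) _,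
    Matrix.map_mul]

lemma Mm_sub (X Y : Matrix (Fin 9) (Fin 9) ℤ) : Mm X - Mm Y = Mm (X - Y) := by
  unfold Mm
  ext p q
  simp [Matrix.submatrix_apply, Matrix.map_apply]

lemma Mm_neg (X : Matrix (Fin 9) (Fin 9) ℤ) : -(Mm X) = Mm (-X) := by
  unfold Mm
  ext p q
  simp [Matrix.submatrix_apply, Matrix.map_apply]

lemma Mm_transpose (X : Matrix (Fin 9) (Fin 9) ℤ) : (Mm X).transpose = Mm X.transpose := rfl

lemma map_kron (X Y : Matrix (Fin 3) (Fin 3) ℤ) :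
    (X.map (Int.castRingHom ℂ)) ⊗ₖ (Y.map (Int.castRingHom ℂ))
      = (X ⊗ₖ Y).map (Int.castRingHom ℂ) := by
  ext p q
  simp [Matrix.kroneckerMap_apply, Matrix.map_apply]

lemma hsp : sp = zsp.map (Int.castRingHom ℂ) := by
  ext i j
  fin_cases i <;> fin_cases j <;> simp [sp, zsp, Matrix.vecHead, Matrix.vecTail]

lemma hsm : sm = zsm.map (Int.castRingHom ℂ) := by
  ext i j
  fin_cases i <;> fin_cases j <;> simp [sm, zsm, Matrix.vecHead, Matrix.vecTail]

lemma hone : (1 : Matrix (Fin 3) (Fin 3) ℂ)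
    = (1 : Matrix (Fin 3) (Fin 3) ℤ).map (Int.castRingHom ℂ) :=
  (Matrix.map_one _ (by simp) (by simp)).symm

lemma hSig_map : Sig = zSig.map (Int.castRingHom ℂ) := by
  rw [Sig, zSig, hsp, hsm, hone, pow_two, pow_two, ← Matrix.map_mul, map_kron, map_kron,
    map_kron, map_kron, ← Matrix.map_add, ← Matrix.map_add, ← Matrix.map_add] <;>
  exact map_add (Int.castRingHom ℂ)

lemma hzSig : zSig = zA.submatrix e e := by decide

lemma hSig : Sig = Mm zA := by
  rw [hSig_map, hzSig, Mm]
  rfl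

set_option maxHeartbeats 1000000 in
lemma hzB : zA * zA.transpose - zA.transpose * zA = zB := by decide
set_option maxHeartbeats 1000000 in
lemma hzC : zB * zA - zA * zB = zC := by decide
set_option maxHeartbeats 1000000 in
lemma hzD : -(zB * zA.transpose - zA.transpose * zB) = zD := by decide
set_option maxHeartbeats 1000000 in
lemma hzE : zC * zD - zD * zC = zE := by decide
set_option maxHeartbeats 1000000 in
lemma hzcomm : zB * zE = zE * zB := by decide

lemma hSigZ : SigZ = Mm zB := by
  rw [SigZ, SigM, hSig, Mm_transpose, Mm_mul, Mm_mul, Mm_sub, hzB]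

lemma hLamP : LamP = Mm zC := by
  rw [LamP, hSigZ, hSig, Mm_mul, Mm_mul, Mm_sub, hzC]

lemma hLamM : LamM = Mm zD := by
  rw [LamM, hSigZ, SigM, hSig, Mm_transpose, Mm_mul, Mm_mul, Mm_sub, Mm_neg, hzD]

lemma hLamZ : LamZ = Mm zE := by
  rw [LamZ, hLamP, hLamM, Mm_mul, Mm_mul, Mm_sub, hzE]

end MotzkinAux

open MotzkinAux in
theorem SigmaZ_LambdaZ_commute : SigZ * LamZ = LamZ * SigZ := by
  rw [hSigZ, hLamZ, Mm_mul, Mm_mul, hzcomm]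
end
end

section
/- For the two-site chain, the matrix p := Sᶻ - (7/6)Σᶻ + (1/24)Λᶻ commutes with both Σ⁺ and Σ⁻. -/
open Matrix
open scoped Kronecker

noncomputable section

/-- Sᶻ = sᶻ ⊗ I + I ⊗ sᶻ. -/
def Sz : Matrix (Fin 3 × Fin 3) (Fin 3 × Fin 3) ℂ :=
  sz ⊗ₖ (1 : Matrix (Fin 3) (Fin 3) ℂ) + (1 : Matrix (Fin 3) (Fin 3) ℂ) ⊗ₖ sz

/-- The central element p = Sᶻ - (7/6)Σᶻ + (1/24)Λᶻ. -/
def pC : Matrix (Fin 3 × Fin 3) (Fin 3 × Fin 3) ℂ :=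
  Sz - (7/6 : ℂ) • SigZ + (1/24 : ℂ) • LamZ

/-! ### Integer versions for computation -/

def spZ : Matrix (Fin 3) (Fin 3) ℤ := !![0,1,0; 0,0,1; 0,0,0]
def smZ : Matrix (Fin 3) (Fin 3) ℤ := !![0,0,0; 1,0,0; 0,1,0]
def szZ : Matrix (Fin 3) (Fin 3) ℤ := !![1,0,0; 0,0,0; 0,0,-1]

def SigI : Matrix (Fin 3 × Fin 3) (Fin 3 × Fin 3) ℤ :=
  spZ ⊗ₖ (1 : Matrix (Fin 3) (Fin 3) ℤ) + (1 : Matrix (Fin 3) (Fin 3) ℤ) ⊗ₖ spZ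
    + (spZ ^ 2) ⊗ₖ smZ + smZ ⊗ₖ (spZ ^ 2)

def SigMI : Matrix (Fin 3 × Fin 3) (Fin 3 × Fin 3) ℤ := SigI.transpose
def SigZI : Matrix (Fin 3 × Fin 3) (Fin 3 × Fin 3) ℤ := SigI * SigMI - SigMI * SigI
def LamPI : Matrix (Fin 3 × Fin 3) (Fin 3 × Fin 3) ℤ := SigZI * SigI - SigI * SigZI
def LamMI : Matrix (Fin 3 × Fin 3) (Fin 3 × Fin 3) ℤ := -(SigZI * SigMI - SigMI * SigZI)
def LamZI : Matrix (Fin 3 × Fin 3) (Fin 3 × Fin 3) ℤ := LamPI * LamMI - LamMI * LamPI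
def SzI : Matrix (Fin 3 × Fin 3) (Fin 3 × Fin 3) ℤ :=
  szZ ⊗ₖ (1 : Matrix (Fin 3) (Fin 3) ℤ) + (1 : Matrix (Fin 3) (Fin 3) ℤ) ⊗ₖ szZ
def Q : Matrix (Fin 3 × Fin 3) (Fin 3 × Fin 3) ℤ :=
  (24 : ℤ) • SzI - (28 : ℤ) • SigZI + LamZI

abbrev cmap {n : Type*} (M : Matrix n n ℤ) : Matrix n n ℂ :=
  M.map (Int.castRingHom ℂ)

lemma cmap_mul {n : Type*} [Fintype n] [DecidableEq n] (A B : Matrix n n ℤ) :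
    cmap (A * B) = cmap A * cmap B := Matrix.map_mul

lemma cmap_add {n : Type*} (A B : Matrix n n ℤ) :
    cmap (A + B) = cmap A + cmap B := Matrix.map_add _ (by simp) _ _

lemma cmap_sub {n : Type*} (A B : Matrix n n ℤ) :
    cmap (A - B) = cmap A - cmap B := Matrix.map_sub _ (by simp) _ _

lemma cmap_neg {n : Type*} (A : Matrix n n ℤ) : cmap (-A) = -cmap A := by
  ext i j; simp [Matrix.map_apply]

lemma cmap_smul {n : Type*} (c : ℤ) (A : Matrix n n ℤ) :
    cmap (c • A) = (c : ℂ) • cmap A := by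
  ext i j; simp [Matrix.map_apply]

lemma cmap_transpose {n : Type*} (A : Matrix n n ℤ) :
    cmap (A.transpose) = (cmap A).transpose := rfl

lemma cmap_one {n : Type*} [Fintype n] [DecidableEq n] :
    cmap (1 : Matrix n n ℤ) = 1 := Matrix.map_one _ (by simp) (by simp)

lemma cmap_kron (A B : Matrix (Fin 3) (Fin 3) ℤ) :
    cmap (A ⊗ₖ B) = cmap A ⊗ₖ cmap B := by
  ext ⟨a, b⟩ ⟨c, d⟩
  simp [Matrix.map_apply, Matrix.kroneckerMap_apply]

lemma sp_eq : sp = cmap spZ := by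
  ext i j; fin_cases i <;> fin_cases j <;> simp [sp, spZ, Matrix.map_apply, Matrix.vecHead, Matrix.vecTail]

lemma sm_eq : sm = cmap smZ := by
  ext i j; fin_cases i <;> fin_cases j <;> simp [sm, smZ, Matrix.map_apply, Matrix.vecHead, Matrix.vecTail]

lemma sz_eq : sz = cmap szZ := by
  ext i j; fin_cases i <;> fin_cases j <;> simp [sz, szZ, Matrix.map_apply, Matrix.vecHead, Matrix.vecTail]

lemma Sig_eq : Sig = cmap SigI := by
  simp only [Sig, SigI, cmap_add, cmap_kron, cmap_one, cmap_mul, sp_eq, sm_eq, pow_two]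

lemma SigM_eq : SigM = cmap SigMI := by
  rw [SigM, SigMI, Sig_eq, cmap_transpose]

lemma SigZ_eq : SigZ = cmap SigZI := by
  simp only [SigZ, SigZI, cmap_sub, cmap_mul, Sig_eq, SigM_eq]

lemma LamP_eq : LamP = cmap LamPI := by
  simp only [LamP, LamPI, cmap_sub, cmap_mul, Sig_eq, SigZ_eq]

lemma LamM_eq : LamM = cmap LamMI := by
  simp only [LamM, LamMI, cmap_neg, cmap_sub, cmap_mul, SigM_eq, SigZ_eq]

lemma LamZ_eq : LamZ = cmap LamZI := by
  simp only [LamZ, LamZI, cmap_sub, cmap_mul, LamP_eq, LamM_eq]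

lemma Sz_eq : Sz = cmap SzI := by
  simp only [Sz, SzI, cmap_add, cmap_kron, cmap_one, sz_eq]

lemma pC_eq : pC = (1/24 : ℂ) • cmap Q := by
  rw [pC, Q, cmap_add, cmap_sub, cmap_smul, cmap_smul, Sz_eq, SigZ_eq, LamZ_eq]
  rw [smul_add, smul_sub, smul_smul, smul_smul]
  norm_num

lemma QcommP : Q * SigI = SigI * Q := by decide
lemma QcommM : Q * SigMI = SigMI * Q := by decide

theorem central_element_commutes : pC * Sig = Sig * pC ∧ pC * SigM = SigM * pC := by
  constructor
  · rw [pC_eq, Sig_eq, smul_mul_assoc, mul_smul_comm, ← cmap_mul, ← cmap_mul, QcommP]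
  · rw [pC_eq, SigM_eq, smul_mul_assoc, mul_smul_comm, ← cmap_mul, ← cmap_mul, QcommM]
end
end
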